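/- There exists a universal constant C > 0 such that the following holds for all integers n ≥ r ≥ s ≥ 1 with r even: if Q ⊆ 𝔽₂^n is a linear [n,k,d]-code with d > 2(r−s), and Δ_r = {x ∈ 𝔽₂^n : Δ(x) = r}, then G_{Q ∩ Δ_r} is an (n,r,s)-design with independence number α(G_{Q ∩ Δ_r}) ≤ C·r³·2^{2(n−k)/r}. -/

import Mathlib

/-- An `(n,r,s)`-design: an `r`-uniform hypergraph on vertex set `Fin n` (given by its
finite set of hyperedges) in which any two distinct hyperedges intersect in fewer than
`s` vertices. -/
def IsDesign (n r s : ℕ) (E : Finset (Finset (Fin n))) : Prop :=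
  (∀ e ∈ E, e.card = r) ∧
  ∀ e₁ ∈ E, ∀ e₂ ∈ E, e₁ ≠ e₂ → (e₁ ∩ e₂).card < s

/-- The independence number of a hypergraph: the size of the largest set of vertices
containing no hyperedge. -/
noncomputable def indepNum (n : ℕ) (E : Finset (Finset (Fin n))) : ℕ :=
  sSup {m | ∃ S : Finset (Fin n), (∀ e ∈ E, ¬ e ⊆ S) ∧ S.card = m}

/-- The Hamming weight `Δ(x) = #{i : x_i = 1}` of a vector `x ∈ 𝔽₂ⁿ`. -/
def wt {n : ℕ} (x : Fin n → ZMod 2) : ℕ :=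
  (Finset.univ.filter (fun i => x i = 1)).card

/-- The Hamming distance `Δ(x,y) = Δ(x − y)`. -/
def hdist {n : ℕ} (x y : Fin n → ZMod 2) : ℕ := wt (x - y)

/-- The support `supp(x) = {i : x_i = 1}` of a vector `x ∈ 𝔽₂ⁿ`. -/
def supp {n : ℕ} (x : Fin n → ZMod 2) : Finset (Fin n) :=
  Finset.univ.filter (fun i => x i = 1)

/-- The hypergraph `G_T` associated to `T ⊆ 𝔽₂ⁿ`: vertex set `[n]`, hyperedges
`{supp(x) : x ∈ T}`. -/
def hypergraphOf {n : ℕ} (T : Finset (Fin n → ZMod 2)) : Finset (Finset (Fin n)) :=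
  T.image supp

/-- The set of codewords of `Q` of Hamming weight exactly `r`, as a finite set. -/
noncomputable def weightSlice (n r : ℕ) (Q : Submodule (ZMod 2) (Fin n → ZMod 2)) :
    Finset (Fin n → ZMod 2) :=
  (Set.toFinite {x | x ∈ Q ∧ wt x = r}).toFinset


open Polynomial Finset
open scoped symmDiff
set_option maxHeartbeats 1000000

namespace DesignAux

noncomputable def KPad (a d : ℕ) : Polynomial ℤ := (1 + X) ^ a * (1 - X) ^ d

noncomputable def Kc (a d j : ℕ) : ℤ := (KPad a d).coeff j

lemma kpad_deriv (a d : ℕ) :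
    (1 - X ^ 2) * derivative (KPad a d) =
      (C ((a : ℤ) - d) - C ((a : ℤ) + d) * X) * KPad a d := by
  have key : ∀ (p : Polynomial ℤ) (n : ℕ), C (n : ℤ) * (p ^ (n - 1) * p) = C (n : ℤ) * p ^ n := by
    intro p n
    cases n with
    | zero => simp
    | succ k => rw [Nat.add_sub_cancel, ← pow_succ]
  unfold KPad
  rw [derivative_mul, derivative_pow, derivative_pow]
  have h1 : derivative (1 + X : Polynomial ℤ) = 1 := by simp
  have h2 : derivative (1 - X : Polynomial ℤ) = -1 := by simp
  rw [h1, h2]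
  have e1 := key (1 + X : Polynomial ℤ) a
  have e2 := key (1 - X : Polynomial ℤ) d
  have hC : (C ((a : ℤ) - d) - C ((a : ℤ) + d) * X)
      = C (a : ℤ) * (1 - X) - C (d : ℤ) * (1 + X) := by
    simp only [map_sub, map_add]
    ring
  rw [hC]
  have hx : (1 - X ^ 2 : Polynomial ℤ) = (1 - X) * (1 + X) := by ring
  rw [hx]
  linear_combination ((1 - X : Polynomial ℤ) ^ (d + 1)) * e1 - ((1 + X : Polynomial ℤ) ^ (a + 1)) * e2

lemma kc_rec (a d : ℕ) (i : ℕ) :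
    ((i : ℤ) + 2) * Kc a d (i + 2) =
      ((a : ℤ) - d) * Kc a d (i + 1) - ((a : ℤ) + d - i) * Kc a d i := by
  unfold Kc
  have h := kpad_deriv a d
  have h' := congrArg (fun p => Polynomial.coeff p (i + 1)) h
  rw [sub_mul, one_mul, coeff_sub] at h'
  rw [sub_mul, coeff_sub, mul_assoc, coeff_C_mul, coeff_C_mul] at h'
  rw [coeff_derivative] at h'
  have hx2 : (X ^ 2 * derivative (KPad a d)).coeff (i + 1) = (i : ℤ) * (KPad a d).coeff i := by
    rw [coeff_X_pow_mul']
    cases i with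
    | zero => simp
    | succ j =>
      simp only [show j + 1 + 1 - 2 = j from rfl]
      rw [if_pos (by omega), coeff_derivative]
      push_cast
      ring
  rw [hx2] at h'
  have hXf : (X * KPad a d).coeff (i + 1) = (KPad a d).coeff i := by
    rw [coeff_X_mul]
  rw [hXf] at h'
  have hidx : i + 1 + 1 = i + 2 := rfl
  rw [hidx] at h'
  push_cast at h' ⊢
  linarith [h']

lemma kc_zero (a d : ℕ) : Kc a d 0 = 1 := by
  unfold Kc KPad
  rw [coeff_zero_eq_eval_zero]
  simp

lemma kc_one (a d : ℕ) : Kc a d 1 = (a : ℤ) - d := by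
  have h := congrArg (Polynomial.eval 0) (kpad_deriv a d)
  simp only [eval_mul, eval_sub, eval_add, eval_one, eval_pow, eval_X, eval_C,
    mul_zero, sub_zero] at h
  have h0 : Polynomial.eval 0 (KPad a d) = 1 := by unfold KPad; simp
  have h1 : Polynomial.eval 0 (derivative (KPad a d)) = Kc a d 1 := by
    rw [← coeff_zero_eq_eval_zero, coeff_derivative]
    unfold Kc
    push_cast
    ring
  rw [h0, h1] at h
  have : (0 : ℤ) ^ 2 = 0 := by norm_num
  rw [this] at h
  linarith [h]

lemma coeff_comp_negX (p : Polynomial ℤ) (k : ℕ) :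
    (p.comp (-X)).coeff k = (-1) ^ k * p.coeff k := by
  induction p using Polynomial.induction_on' with
  | add p q hp hq => simp [add_comp, hp, hq, mul_add]
  | monomial n b =>
    rw [Polynomial.monomial_comp, neg_pow]
    rw [show ((-1 : Polynomial ℤ) ^ n) = C ((-1 : ℤ) ^ n) by simp]
    rw [show C b * (C ((-1 : ℤ) ^ n) * X ^ n) = C (b * (-1) ^ n) * X ^ n by
      rw [C_mul]; ring]
    rw [coeff_C_mul, coeff_X_pow, coeff_monomial]
    by_cases h : n = k
    · subst h; simp [mul_comm]
    · rw [if_neg (fun h' => h h'.symm), if_neg h, mul_zero, mul_zero]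

lemma kpad_comp (a d : ℕ) : (KPad a d).comp (-X) = KPad d a := by
  unfold KPad
  rw [mul_comp, pow_comp, pow_comp, add_comp, sub_comp, one_comp, X_comp]
  ring

lemma kc_symm (a d r : ℕ) (hre : Even r) : Kc d a r = Kc a d r := by
  unfold Kc
  rw [← kpad_comp a d, coeff_comp_negX, hre.neg_one_pow, one_mul]

lemma kc_d_zero (a r : ℕ) : Kc a 0 r = (a.choose r : ℤ) := by
  unfold Kc KPad
  rw [pow_zero, mul_one]
  rw [show (1 + X : Polynomial ℤ) = X + 1 by ring]
  rw [coeff_X_add_one_pow]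


lemma kc_abs_bound (a d r : ℕ) (c : ℤ) (hc0 : 0 < c)
    (hc : 4 * r * ((a : ℤ) + d) ≤ c ^ 2) (hrm : r ≤ a + d) :
    ∀ j ≤ r, |Kc a d j| * (j.factorial : ℤ) ≤ (|(a : ℤ) - d| + c) ^ j := by
  have hy0 : (0 : ℤ) ≤ |(a : ℤ) - d| := abs_nonneg _
  intro j
  induction j using Nat.strong_induction_on with
  | _ j IH =>
    intro hj
    rcases j with _ | j
    · simp [kc_zero]
    rcases j with _ | i
    · show |Kc a d 1| * ((Nat.factorial 1 : ℕ) : ℤ) ≤ (|(a : ℤ) - d| + c) ^ 1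
      simp only [kc_one, Nat.factorial_one, Nat.cast_one, mul_one, pow_one]
      linarith [abs_nonneg ((a:ℤ) - d)]
    · -- j = i + 2
      have IH1 := IH (i+1) (by omega) (by omega)
      have IH0 := IH i (by omega) (by omega)
      set y := (a : ℤ) - d with hydef
      set Z : ℤ := |y| + c with hZdef
      have hZc : c ≤ Z := by rw [hZdef]; linarith [abs_nonneg y]
      have hZ0 : (0 : ℤ) ≤ Z := by linarith
      have hZy : |y| ≤ Z := by rw [hZdef]; linarith
      have hrec := kc_rec a d i
      have him : (i : ℤ) ≤ (a : ℤ) + d := by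
        have h' : (i : ℕ) ≤ a + d := by omega
        exact_mod_cast h'
      have hi0 : (0:ℤ) ≤ (i:ℤ) := Int.natCast_nonneg i
      have hm0 : (0:ℤ) ≤ (a:ℤ) + d := by
        have := Int.natCast_nonneg a; have := Int.natCast_nonneg d; linarith
      have hmi : |(a : ℤ) + d - i| ≤ (a : ℤ) + d := by
        rw [abs_of_nonneg (by linarith)]; linarith
      have key1 : |((i : ℤ) + 2) * Kc a d (i+2)| ≤ |y| * |Kc a d (i+1)| + ((a:ℤ)+d) * |Kc a d i| := by
        rw [hrec]
        calc |y * Kc a d (i + 1) - ((a:ℤ) + d - i) * Kc a d i|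
            ≤ |y * Kc a d (i + 1)| + |((a:ℤ) + d - i) * Kc a d i| := abs_sub _ _
          _ = |y| * |Kc a d (i+1)| + |(a:ℤ) + d - i| * |Kc a d i| := by rw [abs_mul, abs_mul]
          _ ≤ |y| * |Kc a d (i+1)| + ((a:ℤ)+d) * |Kc a d i| := by
              have h2 := mul_le_mul_of_nonneg_right hmi (abs_nonneg (Kc a d i))
              linarith
      have habs2 : |((i : ℤ) + 2)| = (i:ℤ) + 2 := abs_of_nonneg (by linarith)
      have key2 : ((i : ℤ)+2) * |Kc a d (i+2)| ≤ |y| * |Kc a d (i+1)| + ((a:ℤ)+d) * |Kc a d i| := by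
        rw [← habs2, ← abs_mul]; exact key1
      have hfact2 : ((i+2).factorial : ℤ) = ((i:ℤ)+2) * ((i+1).factorial : ℤ) := by
        rw [Nat.factorial_succ]; push_cast; ring
      have hfact1 : ((i+1).factorial : ℤ) = ((i:ℤ)+1) * ((i).factorial : ℤ) := by
        rw [Nat.factorial_succ]; push_cast; ring
      have hf1pos : (0:ℤ) ≤ ((i+1).factorial : ℤ) := Int.natCast_nonneg _
      have step1 : |Kc a d (i+2)| * ((i+2).factorial : ℤ)
          ≤ (|y| * |Kc a d (i+1)| + ((a:ℤ)+d) * |Kc a d i|) * ((i+1).factorial : ℤ) := by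
        rw [hfact2]
        calc |Kc a d (i+2)| * (((i:ℤ)+2) * ((i+1).factorial : ℤ))
            = (((i:ℤ)+2) * |Kc a d (i+2)|) * ((i+1).factorial : ℤ) := by ring
          _ ≤ _ := mul_le_mul_of_nonneg_right key2 hf1pos
      have step2 : (|y| * |Kc a d (i+1)| + ((a:ℤ)+d) * |Kc a d i|) * ((i+1).factorial : ℤ)
          ≤ |y| * Z^(i+1) + ((a:ℤ)+d) * (((i:ℤ)+1) * Z^i) := by
        have t1 : |y| * (|Kc a d (i+1)| * ((i+1).factorial : ℤ)) ≤ |y| * Z^(i+1) :=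
          mul_le_mul_of_nonneg_left IH1 hy0
        have t3 : ((a:ℤ)+d) * (((i:ℤ)+1) * (|Kc a d i| * ((i).factorial:ℤ)))
            ≤ ((a:ℤ)+d) * (((i:ℤ)+1) * Z^i) := by
          apply mul_le_mul_of_nonneg_left _ hm0
          exact mul_le_mul_of_nonneg_left IH0 (by linarith)
        calc (|y| * |Kc a d (i+1)| + ((a:ℤ)+d) * |Kc a d i|) * ((i+1).factorial : ℤ)
            = |y| * (|Kc a d (i+1)| * ((i+1).factorial : ℤ))
              + ((a:ℤ)+d) * (((i:ℤ)+1) * (|Kc a d i| * ((i).factorial:ℤ))) := by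
              rw [hfact1]; ring
          _ ≤ _ := by linarith
      have step3 : |y| * Z^(i+1) + ((a:ℤ)+d) * (((i:ℤ)+1) * Z^i) ≤ Z^(i+2) := by
        have hZi : (0:ℤ) ≤ Z^i := pow_nonneg hZ0 i
        have hir : ((i:ℤ)+1) ≤ 4 * r := by
          have h' : (i+1 : ℕ) ≤ 4*r := by omega
          exact_mod_cast h'
        have h1 : ((a:ℤ)+d) * ((i:ℤ)+1) ≤ 4 * r * ((a:ℤ)+d) := by nlinarith
        have h2 : ((a:ℤ)+d) * ((i:ℤ)+1) ≤ c^2 := le_trans h1 hc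
        have hcz : c^2 ≤ c * Z := by nlinarith
        have expand : Z^(i+2) = |y| * Z^(i+1) + (c*Z) * Z^i := by
          have hzz : Z^(i+2) = Z^i * (Z * Z) := by ring
          rw [hzz, hZdef]; ring
        rw [expand]
        have h3 : ((a:ℤ)+d) * (((i:ℤ)+1) * Z^i) ≤ (c*Z) * Z^i := by
          calc ((a:ℤ)+d) * (((i:ℤ)+1) * Z^i) = (((a:ℤ)+d) * ((i:ℤ)+1)) * Z^i := by ring
            _ ≤ c^2 * Z^i := mul_le_mul_of_nonneg_right h2 hZi
            _ ≤ (c*Z) * Z^i := mul_le_mul_of_nonneg_right hcz hZi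
        linarith
      linarith

lemma kc_nonneg (a d r : ℕ) (c : ℤ) (hc0 : 0 < c)
    (hc : 4 * r * ((a : ℤ) + d) ≤ c ^ 2) (hy : c ≤ (a : ℤ) - d) :
    ∀ i ≤ r, 0 ≤ Kc a d i ∧
      (i < r → ((a:ℤ)-d) * Kc a d i ≤ 2 * ((i:ℤ)+1) * Kc a d (i+1)) := by
  have hy0 : (0:ℤ) ≤ (a:ℤ) - d := by linarith
  intro i
  induction i with
  | zero =>
    intro _
    refine ⟨by rw [kc_zero]; norm_num, fun _ => ?_⟩
    rw [kc_zero, kc_one]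
    push_cast
    linarith
  | succ i IH =>
    intro hi
    obtain ⟨h0, hstep⟩ := IH (by omega)
    have hst := hstep (by omega)
    have hK1 : 0 ≤ Kc a d (i+1) := by nlinarith [mul_nonneg hy0 h0]
    refine ⟨hK1, fun hlt => ?_⟩
    have hrec := kc_rec a d i
    have hir : ((i:ℤ)+1) ≤ (r:ℤ) := by exact_mod_cast (by omega : (i+1 : ℕ) ≤ r)
    have hi0 : (0:ℤ) ≤ (i:ℤ) := Int.natCast_nonneg i
    have hm0 : (0:ℤ) ≤ (a:ℤ) + d := by
      have := Int.natCast_nonneg a; have := Int.natCast_nonneg d; linarith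
    have hr0 : (0:ℤ) ≤ (r:ℤ) := Int.natCast_nonneg r
    have hprod : ((i:ℤ)+1) * (((a:ℤ)+d) - i) ≤ (r:ℤ) * ((a:ℤ)+d) := by
      rcases le_or_gt 0 (((a:ℤ)+d) - i) with hpos | hneg
      · nlinarith
      · nlinarith
    have hmul : ((a:ℤ)-d) * (((a:ℤ)-d) * Kc a d i) ≤ ((a:ℤ)-d) * (2 * ((i:ℤ)+1) * Kc a d (i+1)) :=
      mul_le_mul_of_nonneg_left hst hy0
    have hyy : c^2 ≤ ((a:ℤ)-d)^2 := by nlinarith [mul_nonneg (sub_nonneg.2 hy) (by linarith : (0:ℤ) ≤ ((a:ℤ)-d) + c)]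
    have hysq : c^2 * Kc a d i ≤ ((a:ℤ)-d)^2 * Kc a d i := mul_le_mul_of_nonneg_right hyy h0
    have h4r : 4 * (((i:ℤ)+1) * ((((a:ℤ)+d) - i))) * Kc a d i ≤ 4 * ((r:ℤ) * ((a:ℤ)+d)) * Kc a d i := by
      have h' : 4 * (((i:ℤ)+1) * ((((a:ℤ)+d) - i))) ≤ 4 * ((r:ℤ) * ((a:ℤ)+d)) := by linarith
      exact mul_le_mul_of_nonneg_right h' h0
    have hcs : 4 * (r:ℤ) * ((a:ℤ)+d) * Kc a d i ≤ c^2 * Kc a d i :=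
      mul_le_mul_of_nonneg_right hc h0
    have hkey : 0 ≤ ((a:ℤ)-d) * Kc a d (i+1) - 2 * (((a:ℤ)+d) - i) * Kc a d i := by
      have h2i : (0:ℤ) < 2 * ((i:ℤ)+1) := by linarith
      rw [← mul_nonneg_iff_of_pos_left h2i]
      nlinarith [hmul, hysq, h4r, hcs]
    have hgoal : 2 * (((i:ℤ)+2) * Kc a d (i+2)) =
        2*((a:ℤ)-d) * Kc a d (i+1) - 2*(((a:ℤ)+d) - i) * Kc a d i := by
      rw [hrec]; ring
    show ((a:ℤ)-d) * Kc a d (i+1) ≤ 2 * ((i:ℤ)+1+1) * Kc a d (i+2)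
    push_cast
    linarith [hgoal, hkey]

lemma kc_neg_bound (a d r : ℕ) (c : ℤ) (hc0 : 0 < c)
    (hc : 4 * r * ((a : ℤ) + d) ≤ c ^ 2) (hrm : r ≤ a + d) (hre : Even r) :
    (r.factorial : ℤ) * (-(Kc a d r)) ≤ (2*c)^r := by
  have hrhs : (0:ℤ) ≤ (2*c)^r := by positivity
  have hfac0 : (0:ℤ) ≤ (r.factorial : ℤ) := Int.natCast_nonneg _
  rcases le_or_gt c ((a:ℤ) - d) with hyc | hyc
  · have h := (kc_nonneg a d r c hc0 hc hyc r le_rfl).1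
    have h' : (r.factorial : ℤ) * (-(Kc a d r)) ≤ 0 :=
      mul_nonpos_of_nonneg_of_nonpos hfac0 (by linarith)
    linarith
  rcases le_or_gt ((a:ℤ) - d) (-c) with hyc2 | hyc2
  · have hsym := kc_symm a d r hre
    have h := (kc_nonneg d a r c hc0 (by push_cast at hc ⊢; linarith) (by linarith) r le_rfl).1
    rw [hsym] at h
    have h' : (r.factorial : ℤ) * (-(Kc a d r)) ≤ 0 :=
      mul_nonpos_of_nonneg_of_nonpos hfac0 (by linarith)
    linarith
  · have h1 : |(a:ℤ) - d| < c := abs_lt.mpr ⟨by linarith, by linarith⟩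
    have hb := kc_abs_bound a d r c hc0 hc hrm r le_rfl
    have h2 : (|(a:ℤ)-d| + c)^r ≤ (2*c)^r :=
      pow_le_pow_left₀ (by positivity) (by linarith) r
    have h3 : -(Kc a d r) ≤ |Kc a d r| := neg_le_abs _
    have h4 : (r.factorial:ℤ) * (-(Kc a d r)) ≤ |Kc a d r| * (r.factorial:ℤ) := by
      calc (r.factorial:ℤ) * (-(Kc a d r)) ≤ (r.factorial:ℤ) * |Kc a d r| :=
            mul_le_mul_of_nonneg_left h3 hfac0
        _ = |Kc a d r| * (r.factorial:ℤ) := mul_comm _ _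
    linarith


/-- coefficient of a product of linear factors. -/
lemma coeff_prod_linear {σ : Type*} [DecidableEq σ] (A : Finset σ) (c : σ → ℤ) :
    ∀ k, (∏ s ∈ A, (1 + C (c s) * X)).coeff k = ∑ T ∈ A.powersetCard k, ∏ s ∈ T, c s := by
  induction A using Finset.induction_on with
  | empty =>
    intro k
    rcases k with _ | k
    · simp
    · rw [Finset.prod_empty, Polynomial.coeff_one, if_neg (by omega : ¬ k + 1 = 0)]
      rw [show Finset.powersetCard (k+1) (∅ : Finset σ) = ∅ by
        ext T
        simp [Finset.mem_powersetCard, Finset.subset_empty]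
        rintro rfl
        simp]
      simp
  | @insert a A ha IH =>
    intro k
    rw [Finset.prod_insert ha]
    have expand : (1 + C (c a) * X) * ∏ s ∈ A, (1 + C (c s) * X)
        = (∏ s ∈ A, (1 + C (c s) * X)) + C (c a) * (X * ∏ s ∈ A, (1 + C (c s) * X)) := by
      ring
    rw [expand, coeff_add, coeff_C_mul]
    rcases k with _ | k
    · rw [Polynomial.mul_coeff_zero, coeff_X_zero, zero_mul, mul_zero, add_zero]
      rw [IH 0]
      rw [Finset.powersetCard_zero, Finset.powersetCard_zero]
    · rw [coeff_X_mul, IH (k+1), IH k]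
      rw [Finset.powersetCard_succ_insert ha]
      rw [Finset.sum_union]
      · congr 1
        rw [Finset.sum_image]
        · rw [Finset.mul_sum]
          refine Finset.sum_congr rfl fun T hT => ?_
          have haT : a ∉ T := fun hmem =>
            ha ((Finset.mem_powersetCard.mp hT).1 hmem)
          rw [Finset.prod_insert haT]
        · intro T hT T' hT' hEq
          have haT : a ∉ T := fun hmem => ha ((Finset.mem_powersetCard.mp hT).1 hmem)
          have haT' : a ∉ T' := fun hmem => ha ((Finset.mem_powersetCard.mp hT').1 hmem)
          have := congrArg (fun (s : Finset σ) => s.erase a) hEq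
          simpa [Finset.erase_insert haT, Finset.erase_insert haT'] using this
      · rw [Finset.disjoint_left]
        intro T hT hT'
        obtain ⟨T', hT', rfl⟩ := Finset.mem_image.mp hT'
        exact ha ((Finset.mem_powersetCard.mp hT).1 (Finset.mem_insert_self a T'))

lemma zmod2_cases : ∀ z : ZMod 2, z = 0 ∨ z = 1 := by decide

/-- the sign of a vector on a subset. -/
lemma prod_sign_T {ι : Type*} [DecidableEq ι] (y : ι → ZMod 2) (T : Finset ι) :
    (∏ s ∈ T, (if y s = 1 then (-1 : ℤ) else 1))
      = (if (∑ s ∈ T, y s) = 0 then (1 : ℤ) else -1) := by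
  induction T using Finset.induction_on with
  | empty => simp
  | @insert a T ha IH =>
    rw [Finset.prod_insert ha, Finset.sum_insert ha, IH]
    rcases zmod2_cases (y a) with h | h <;> rcases zmod2_cases (∑ s ∈ T, y s) with h2 | h2 <;>
      simp [h, h2] <;> decide

/-- product of linear factors for a given vector equals KPad. -/
lemma prod_sign {ι : Type*} [Fintype ι] [DecidableEq ι] (y : ι → ZMod 2) :
    (∏ s : ι, (1 + C (if y s = 1 then (-1 : ℤ) else 1) * X))
      = KPad (Fintype.card ι - (Finset.univ.filter (fun i => y i = 1)).card)
          ((Finset.univ.filter (fun i => y i = 1)).card) := by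
  classical
  have hsplit := Finset.prod_filter_mul_prod_filter_not (Finset.univ : Finset ι)
    (fun i => y i = 1) (fun s => (1 + C (if y s = 1 then (-1 : ℤ) else 1) * X))
  rw [← hsplit]
  have h1 : (∏ s ∈ Finset.univ.filter (fun i => y i = 1),
      (1 + C (if y s = 1 then (-1 : ℤ) else 1) * X))
      = (1 - X) ^ ((Finset.univ.filter (fun i => y i = 1)).card) := by
    rw [Finset.prod_congr rfl (g := fun _ => (1 - X : Polynomial ℤ))
      (fun s hs => by rw [if_pos (Finset.mem_filter.mp hs).2, map_neg, map_one]; ring)]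
    exact Finset.prod_const _
  have h2 : (∏ s ∈ Finset.univ.filter (fun i => ¬ y i = 1),
      (1 + C (if y s = 1 then (-1 : ℤ) else 1) * X))
      = (1 + X) ^ (Fintype.card ι - (Finset.univ.filter (fun i => y i = 1)).card) := by
    rw [Finset.prod_congr rfl (g := fun _ => (1 + X : Polynomial ℤ))
      (fun s hs => by rw [if_neg (Finset.mem_filter.mp hs).2, map_one]; ring)]
    rw [Finset.prod_const]
    congr 1
    have hfc := Finset.card_filter_add_card_filter_not
      (s := (Finset.univ : Finset ι)) (p := fun i => y i = 1)
    rw [Finset.card_univ] at hfc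
    omega
  rw [h1, h2]
  unfold KPad
  ring

/-- Krawtchouk value as a signed sum over r-subsets. -/
lemma kc_as_sum {ι : Type*} [Fintype ι] [DecidableEq ι] (y : ι → ZMod 2) (r : ℕ) :
    Kc (Fintype.card ι - (Finset.univ.filter (fun i => y i = 1)).card)
        ((Finset.univ.filter (fun i => y i = 1)).card) r
      = ∑ T ∈ (Finset.univ : Finset ι).powersetCard r,
          (if (∑ s ∈ T, y s) = 0 then (1 : ℤ) else -1) := by
  unfold Kc
  rw [← prod_sign y, coeff_prod_linear]
  exact Finset.sum_congr rfl fun T _ => prod_sign_T y T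

/-- character sum over a submodule vanishes if the functional is nonzero on it. -/
lemma charsum_zero {ι : Type*} [Fintype ι] [DecidableEq ι]
    (D : Submodule (ZMod 2) (ι → ZMod 2)) [DecidablePred (· ∈ D)] (T : Finset ι)
    (y₀ : ι → ZMod 2) (hy₀ : y₀ ∈ D) (hφ : (∑ s ∈ T, y₀ s) ≠ 0) :
    ∑ y ∈ Finset.univ.filter (· ∈ D), (if (∑ s ∈ T, y s) = 0 then (1 : ℤ) else -1) = 0 := by
  classical
  have hself : ∀ v : ι → ZMod 2, v + v = 0 := by
    intro v
    funext i
    simp only [Pi.add_apply, Pi.zero_apply]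
    rcases zmod2_cases (v i) with h | h <;> rw [h] <;> decide
  have hflip : ∀ y : ι → ZMod 2,
      (if (∑ s ∈ T, (y + y₀) s) = 0 then (1 : ℤ) else -1)
        = -(if (∑ s ∈ T, y s) = 0 then (1 : ℤ) else -1) := by
    intro y
    have hsum : (∑ s ∈ T, (y + y₀) s) = (∑ s ∈ T, y s) + (∑ s ∈ T, y₀ s) := by
      rw [← Finset.sum_add_distrib]
      rfl
    have hy₀1 : (∑ s ∈ T, y₀ s) = 1 := by
      rcases zmod2_cases (∑ s ∈ T, y₀ s) with h | h
      · exact absurd h hφ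
      · exact h
    rw [hsum, hy₀1]
    rcases zmod2_cases (∑ s ∈ T, y s) with h | h <;> rw [h] <;> simp <;> decide
  have hbij : ∑ y ∈ Finset.univ.filter (· ∈ D), (if (∑ s ∈ T, y s) = 0 then (1 : ℤ) else -1)
      = ∑ y ∈ Finset.univ.filter (· ∈ D), (if (∑ s ∈ T, (y + y₀) s) = 0 then (1 : ℤ) else -1) := by
    apply Finset.sum_nbij' (fun y => y + y₀) (fun y => y + y₀)
    · intro a ha
      simp only [Finset.mem_filter, Finset.mem_univ, true_and] at ha ⊢
      exact D.add_mem ha hy₀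
    · intro a ha
      simp only [Finset.mem_filter, Finset.mem_univ, true_and] at ha ⊢
      exact D.add_mem ha hy₀
    · intro a _
      rw [add_assoc, hself y₀, add_zero]
    · intro a _
      rw [add_assoc, hself y₀, add_zero]
    · intro a _
      rw [add_assoc, hself y₀, add_zero]
  have : ∑ y ∈ Finset.univ.filter (· ∈ D), (if (∑ s ∈ T, y s) = 0 then (1 : ℤ) else -1)
      = -∑ y ∈ Finset.univ.filter (· ∈ D), (if (∑ s ∈ T, y s) = 0 then (1 : ℤ) else -1) := by
    nth_rewrite 1 [hbij]
    rw [← Finset.sum_neg_distrib]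
    exact Finset.sum_congr rfl fun y _ => hflip y
  linarith


section Bform
variable (ι : Type*) [Fintype ι] [DecidableEq ι]

noncomputable def bform : LinearMap.BilinForm (ZMod 2) (ι → ZMod 2) :=
  LinearMap.mk₂ (ZMod 2) (fun x y => ∑ i, x i * y i)
    (fun x x' y => by simp [add_mul, Finset.sum_add_distrib])
    (fun c x y => by simp [Finset.mul_sum, mul_assoc])
    (fun x y y' => by simp [mul_add, Finset.sum_add_distrib])
    (fun c x y => by simp [Finset.mul_sum, mul_assoc, mul_left_comm])

variable {ι}

lemma bform_apply (x y : ι → ZMod 2) : bform ι x y = ∑ i, x i * y i := rfl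

lemma bform_comm (x y : ι → ZMod 2) : bform ι x y = bform ι y x := by
  rw [bform_apply, bform_apply]
  exact Finset.sum_congr rfl fun i _ => mul_comm _ _

lemma bform_refl : (bform ι).IsRefl := by
  intro x y h
  rw [bform_comm]
  exact h

lemma bform_nondeg : (bform ι).Nondegenerate := by
  refine (LinearMap.IsRefl.nondegenerate_iff_separatingLeft bform_refl).mpr ?_
  intro x hx
  funext i
  have h := hx (Pi.single i (1 : ZMod 2))
  rw [bform_apply] at h
  have hsum : ∑ j, x j * (Pi.single i (1 : ZMod 2) : ι → ZMod 2) j = x i := by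
    rw [Finset.sum_eq_single i]
    · simp
    · intro j _ hj
      simp [Pi.single_apply, hj]
    · intro h'
      exact absurd (Finset.mem_univ i) h'
  rw [hsum] at h
  exact h

def indT (T : Finset ι) : ι → ZMod 2 := fun s => if s ∈ T then 1 else 0

lemma wt_indT (T : Finset ι) : (Finset.univ.filter (fun i => indT T i = 1)).card = T.card := by
  congr 1
  ext s
  simp only [Finset.mem_filter, Finset.mem_univ, true_and, indT]
  by_cases h : s ∈ T
  · simp [h]
  · simp [h]

lemma bform_indT (T : Finset ι) (x : ι → ZMod 2) : bform ι (indT T) x = ∑ s ∈ T, x s := by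
  rw [bform_apply]
  rw [show (fun i => indT T i * x i) = fun i => if i ∈ T then x i else 0 by
    funext i
    by_cases h : i ∈ T <;> simp [indT, h]]
  rw [Finset.sum_ite_mem, Finset.univ_inter]

end Bform

theorem core {ι : Type*} [Fintype ι] [DecidableEq ι] (P : Submodule (ZMod 2) (ι → ZMod 2))
    (r : ℕ) (hre : Even r) (hr0 : 0 < r)
    (hno : ∀ x ∈ P, (Finset.univ.filter (fun i => x i = 1)).card ≠ r) :
    r.factorial * ((Fintype.card ι).choose r)
      ≤ 2 ^ (Fintype.card ι - Module.finrank (ZMod 2) P)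
        * (4 * (Nat.sqrt (r * Fintype.card ι) + 1)) ^ r := by
  classical
  haveI : Fact (Nat.Prime 2) := ⟨Nat.prime_two⟩
  by_cases hrm : r ≤ Fintype.card ι
  swap
  · rw [Nat.choose_eq_zero_of_lt (by omega), Nat.mul_zero]
    exact Nat.zero_le _
  set m := Fintype.card ι with hm
  set B := bform ι with hB
  set D := B.orthogonal P with hD
  set Df := Finset.univ.filter (· ∈ D) with hDf
  set wty : (ι → ZMod 2) → ℕ := fun y => (Finset.univ.filter (fun i => y i = 1)).card with hwty
  have hident : ∑ y ∈ Df, Kc (m - wty y) (wty y) r = 0 := by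
    have hswap : ∑ y ∈ Df, Kc (m - wty y) (wty y) r
        = ∑ T ∈ (Finset.univ : Finset ι).powersetCard r, ∑ y ∈ Df,
            (if (∑ s ∈ T, y s) = 0 then (1 : ℤ) else -1) := by
      rw [Finset.sum_congr rfl (fun y _ => kc_as_sum y r)]
      exact Finset.sum_comm
    rw [hswap]
    apply Finset.sum_eq_zero
    intro T hT
    obtain ⟨hTsub, hTcard⟩ := Finset.mem_powersetCard.mp hT
    by_cases hall : ∀ y ∈ D, (∑ s ∈ T, y s) = 0
    · exfalso
      have hmemOrth : indT T ∈ B.orthogonal D := by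
        intro n hn
        show B n (indT T) = 0
        rw [bform_comm, bform_indT]
        exact hall n hn
      rw [hD, LinearMap.BilinForm.orthogonal_orthogonal bform_nondeg bform_refl] at hmemOrth
      exact hno _ hmemOrth ((wt_indT T).trans hTcard)
    · push_neg at hall
      obtain ⟨y₀, hy₀D, hy₀⟩ := hall
      exact charsum_zero D T y₀ hy₀D hy₀
  have h0mem : (0 : ι → ZMod 2) ∈ Df := by
    rw [hDf]
    simp only [Finset.mem_filter, Finset.mem_univ, true_and]
    exact D.zero_mem
  have hsplit := Finset.add_sum_erase Df (fun y => Kc (m - wty y) (wty y) r) h0mem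
  have hwty0 : wty 0 = 0 := by
    rw [hwty]
    simp only [Pi.zero_apply]
    rw [Finset.card_eq_zero]
    apply Finset.filter_eq_empty_iff.mpr
    intro _ _
    exact zero_ne_one
  have hKc0 : Kc (m - wty 0) (wty 0) r = (m.choose r : ℤ) := by
    rw [hwty0, Nat.sub_zero, kc_d_zero]
  set c : ℤ := 2 * ((Nat.sqrt (r * m) : ℤ) + 1) with hc
  have hc0 : 0 < c := by positivity
  have hcsq : 4 * r * (m : ℤ) ≤ c ^ 2 := by
    have h1 := Nat.lt_succ_sqrt' (r * m)
    have h2 : (r * m : ℤ) < ((Nat.sqrt (r * m) : ℤ) + 1) ^ 2 := by exact_mod_cast h1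
    rw [hc]
    push_cast
    nlinarith [h2]
  have hbound : ∀ y ∈ Df.erase 0,
      (r.factorial : ℤ) * (-(Kc (m - wty y) (wty y) r)) ≤ (2 * c) ^ r := by
    intro y _
    have hdm : wty y ≤ m := by
      rw [hwty, hm]
      exact le_trans (Finset.card_filter_le _ _) (le_of_eq (Finset.card_univ))
    apply kc_neg_bound _ _ _ _ hc0 _ (by omega) hre
    have hcast : ((m - wty y : ℕ) : ℤ) + (wty y : ℤ) = (m : ℤ) := by
      rw [Nat.cast_sub hdm]
      ring
    rw [hcast]
    exact hcsq
  have hsum_eq : (m.choose r : ℤ) = ∑ y ∈ Df.erase 0, (-(Kc (m - wty y) (wty y) r)) := by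
    have h1 : Kc (m - wty 0) (wty 0) r + ∑ y ∈ Df.erase 0, Kc (m - wty y) (wty y) r = 0 := by
      rw [hsplit]; exact hident
    rw [hKc0] at h1
    rw [Finset.sum_neg_distrib]
    linarith
  have hfinal : (r.factorial : ℤ) * (m.choose r : ℤ) ≤ (Df.card : ℤ) * (2 * c) ^ r := by
    rw [hsum_eq, Finset.mul_sum]
    calc ∑ y ∈ Df.erase 0, (r.factorial : ℤ) * (-(Kc (m - wty y) (wty y) r))
        ≤ ∑ _y ∈ Df.erase 0, (2 * c) ^ r := Finset.sum_le_sum hbound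
      _ = ((Df.erase 0).card : ℤ) * (2 * c) ^ r := by
          rw [Finset.sum_const, nsmul_eq_mul]
      _ ≤ (Df.card : ℤ) * (2 * c) ^ r := by
          apply mul_le_mul_of_nonneg_right _ (by positivity)
          exact_mod_cast Finset.card_le_card (Finset.erase_subset _ _)
  have hcardD : Df.card = 2 ^ (m - Module.finrank (ZMod 2) P) := by
    have h1 : Df.card = Fintype.card D := by
      rw [hDf, ← Fintype.card_subtype]
    have h2 : Fintype.card D = 2 ^ (Module.finrank (ZMod 2) D) := by
      have := Module.card_eq_pow_finrank (K := ZMod 2) (V := D)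
      rwa [ZMod.card 2] at this
    have h3 : Module.finrank (ZMod 2) D = m - Module.finrank (ZMod 2) P := by
      rw [hD, LinearMap.BilinForm.finrank_orthogonal bform_nondeg]
      congr 1
      rw [Module.finrank_fintype_fun_eq_card, hm]
    rw [h1, h2, h3]
  have hfinal2 : (r.factorial : ℤ) * (m.choose r : ℤ)
      ≤ (2 : ℤ) ^ (m - Module.finrank (ZMod 2) P) * ((4 : ℤ) * ((Nat.sqrt (r * m) : ℤ) + 1)) ^ r := by
    rw [hcardD] at hfinal
    have : ((2 : ℤ) * c) = 4 * ((Nat.sqrt (r * m) : ℤ) + 1) := by rw [hc]; ring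
    rw [this] at hfinal
    convert hfinal using 2
    push_cast
    ring
  exact_mod_cast hfinal2


variable {n : ℕ}

/-- supp of a difference is the symmetric difference of supports. -/
lemma supp_sub (x y : Fin n → ZMod 2) : supp (x - y) = (supp x) ∆ (supp y) := by
  ext i
  simp only [supp, Finset.mem_filter, Finset.mem_univ, true_and, Finset.mem_symmDiff,
    Pi.sub_apply]
  rcases zmod2_cases (x i) with hx | hx <;> rcases zmod2_cases (y i) with hy | hy <;>
    rw [hx, hy] <;> simp <;> decide

lemma card_symmDiff_aux (s t : Finset (Fin n)) :
    (s ∆ t).card + 2 * (s ∩ t).card = s.card + t.card := by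
  have h1 : s ∆ t = (s \ t) ∪ (t \ s) := symmDiff_def s t
  have h2 : (s ∆ t).card = (s \ t).card + (t \ s).card := by
    rw [h1]
    exact Finset.card_union_of_disjoint (disjoint_sdiff_sdiff)
  have h3 := Finset.card_sdiff_add_card_inter s t
  have h4 := Finset.card_sdiff_add_card_inter t s
  rw [Finset.inter_comm t s] at h4
  omega

lemma wt_sub_eq (x y : Fin n → ZMod 2) :
    wt (x - y) + 2 * (supp x ∩ supp y).card = wt x + wt y := by
  have : wt (x - y) = (supp (x - y)).card := rfl
  rw [this, supp_sub]
  exact card_symmDiff_aux _ _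

noncomputable def extMap (S : Finset (Fin n)) :
    ({i // i ∈ S} → ZMod 2) →ₗ[ZMod 2] (Fin n → ZMod 2) where
  toFun f := fun i => if h : i ∈ S then f ⟨i, h⟩ else 0
  map_add' f g := by funext i; by_cases h : i ∈ S <;> simp [h]
  map_smul' c f := by funext i; by_cases h : i ∈ S <;> simp [h]

lemma extMap_apply (S : Finset (Fin n)) (f : {i // i ∈ S} → ZMod 2) (i : Fin n) :
    extMap S f i = if h : i ∈ S then f ⟨i, h⟩ else 0 := rfl

lemma wt_extMap (S : Finset (Fin n)) (f : {i // i ∈ S} → ZMod 2) :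
    wt (extMap S f) = (Finset.univ.filter (fun s : {i // i ∈ S} => f s = 1)).card := by
  unfold wt
  symm
  apply Finset.card_bij (fun (s : {i // i ∈ S}) _ => (s : Fin n))
  · intro a ha
    simp only [Finset.mem_filter, Finset.mem_univ, true_and] at ha ⊢
    rw [extMap_apply, dif_pos a.2]
    exact ha
  · intro a _ b _ hab
    exact Subtype.ext hab
  · intro i hi
    simp only [Finset.mem_filter, Finset.mem_univ, true_and] at hi
    rw [extMap_apply] at hi
    by_cases h : i ∈ S
    · refine ⟨⟨i, h⟩, ?_, rfl⟩
      simp only [Finset.mem_filter, Finset.mem_univ, true_and]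
      rw [dif_pos h] at hi
      exact hi
    · rw [dif_neg h] at hi
      exact absurd hi zero_ne_one

lemma supp_extMap_subset (S : Finset (Fin n)) (f : {i // i ∈ S} → ZMod 2) :
    supp (extMap S f) ⊆ S := by
  intro i hi
  simp only [supp, Finset.mem_filter, Finset.mem_univ, true_and] at hi
  rw [extMap_apply] at hi
  by_cases h : i ∈ S
  · exact h
  · rw [dif_neg h] at hi
    exact absurd hi zero_ne_one

lemma indep_card_bound (r k : ℕ) (hr0 : 0 < r) (hre : Even r)
    (Q : Submodule (ZMod 2) (Fin n → ZMod 2)) (hk : Module.finrank (ZMod 2) Q = k)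
    (S : Finset (Fin n)) (hS : ∀ e ∈ hypergraphOf (weightSlice n r Q), ¬ e ⊆ S) :
    r.factorial * (S.card.choose r) ≤ 2 ^ (n - k) * (4 * (Nat.sqrt (r * S.card) + 1)) ^ r := by
  classical
  set P₀ := Q.comap (extMap S) with hP₀
  have hcardι : Fintype.card {i // i ∈ S} = S.card := Fintype.card_coe S
  have hno : ∀ x ∈ P₀, (Finset.univ.filter (fun i => x i = 1)).card ≠ r := by
    intro x hx hwt
    apply hS (supp (extMap S x))
    · apply Finset.mem_image_of_mem
      simp only [weightSlice, Set.Finite.mem_toFinset, Set.mem_setOf_eq]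
      refine ⟨hx, ?_⟩
      rw [wt_extMap]
      exact hwt
    · exact supp_extMap_subset S x
  have hcore := core P₀ r hre hr0 hno
  rw [hcardι] at hcore
  have hdim : S.card - Module.finrank (ZMod 2) P₀ ≤ n - k := by
    let ρ : ↥Q →ₗ[ZMod 2] ({i : Fin n // i ∉ S} → ZMod 2) :=
    { toFun := fun q => fun i => (q : Fin n → ZMod 2) i.val
      map_add' := fun _ _ => rfl
      map_smul' := fun _ _ => rfl }
    have hrk := LinearMap.finrank_range_add_finrank_ker ρ
    have hrange : Module.finrank (ZMod 2) (LinearMap.range ρ) ≤ n - S.card := by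
      have h1 := Submodule.finrank_le (LinearMap.range ρ)
      rw [Module.finrank_fintype_fun_eq_card] at h1
      have h2 : Fintype.card {i : Fin n // i ∉ S} = n - S.card := by
        rw [Fintype.card_subtype_compl, Fintype.card_fin, Fintype.card_coe]
      omega
    have hq0 : ∀ q : ↥(LinearMap.ker ρ), ∀ i : Fin n, i ∉ S →
        ((q : ↥Q) : Fin n → ZMod 2) i = 0 := by
      intro q i hi
      have hq := q.2
      rw [LinearMap.mem_ker] at hq
      exact congrFun hq ⟨i, hi⟩
    let φ : ↥(LinearMap.ker ρ) →ₗ[ZMod 2] ↥P₀ :=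
    { toFun := fun q => ⟨fun s => ((q : ↥Q) : Fin n → ZMod 2) s.val, by
        have hext : extMap S (fun s : {i // i ∈ S} => ((q : ↥Q) : Fin n → ZMod 2) s.val)
            = ((q : ↥Q) : Fin n → ZMod 2) := by
          funext i
          rw [extMap_apply]
          by_cases h : i ∈ S
          · rw [dif_pos h]
          · rw [dif_neg h]
            exact (hq0 q i h).symm
        show extMap S _ ∈ Q
        rw [hext]
        exact (q : ↥Q).2⟩
      map_add' := fun _ _ => rfl
      map_smul' := fun _ _ => rfl }
    have hinj : Function.Injective φ := by
      intro q q' h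
      have hval : ∀ s : {i // i ∈ S}, ((q : ↥Q) : Fin n → ZMod 2) s.val
          = ((q' : ↥Q) : Fin n → ZMod 2) s.val := by
        intro s
        exact congrFun (congrArg Subtype.val h) s
      apply Subtype.ext
      apply Subtype.ext
      funext i
      by_cases hiS : i ∈ S
      · exact hval ⟨i, hiS⟩
      · rw [hq0 q i hiS, hq0 q' i hiS]
    have hker : Module.finrank (ZMod 2) (LinearMap.ker ρ) ≤ Module.finrank (ZMod 2) P₀ :=
      LinearMap.finrank_le_finrank_of_injective hinj
    have hfr_le : Module.finrank (ZMod 2) P₀ ≤ S.card := by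
      have h1 := Submodule.finrank_le P₀
      rwa [Module.finrank_fintype_fun_eq_card, Fintype.card_coe] at h1
    have hQfr : Module.finrank (ZMod 2) ↥Q = k := hk
    have hSn : S.card ≤ n := by
      have h1 := Finset.card_le_univ S
      rwa [Fintype.card_fin] at h1
    omega
  calc r.factorial * (S.card.choose r)
      ≤ 2 ^ (S.card - Module.finrank (ZMod 2) P₀) * (4 * (Nat.sqrt (r * S.card) + 1)) ^ r :=
        hcore
    _ ≤ 2 ^ (n - k) * (4 * (Nat.sqrt (r * S.card) + 1)) ^ r := by
        apply Nat.mul_le_mul_right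
        exact Nat.pow_le_pow_right (by norm_num) hdim

lemma numeric_bound (m r ℓ : ℕ) (hr0 : 0 < r)
    (h : r.factorial * (m.choose r) ≤ 2 ^ ℓ * (4 * (Nat.sqrt (r * m) + 1)) ^ r) :
    (m : ℝ) ≤ 256 * r * (2 : ℝ) ^ ((2 * (ℓ : ℝ)) / (r : ℝ)) := by
  have hr0' : (0:ℝ) < (r:ℝ) := by exact_mod_cast hr0
  have hrpow1 : (1:ℝ) ≤ (2:ℝ) ^ ((2 * (ℓ:ℝ)) / (r:ℝ)) :=
    Real.one_le_rpow (by norm_num) (by positivity)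
  by_cases hm : m ≤ 2 * r
  · have h1 : (m:ℝ) ≤ 2 * r := by exact_mod_cast hm
    nlinarith
  push_neg at hm
  have hm1 : 1 ≤ m := by omega
  have h1 : (m + 1 - r) ^ r ≤ r.factorial * (m.choose r) := by
    rw [← Nat.descFactorial_eq_factorial_mul_choose]
    exact Nat.pow_sub_le_descFactorial m r
  have h2 : m ^ r ≤ 2 ^ r * ((m + 1 - r) ^ r) := by
    rw [← Nat.mul_pow]
    apply Nat.pow_le_pow_left
    omega
  set s := Nat.sqrt (r * m) with hs
  have hs1 : 1 ≤ s := by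
    rw [hs]
    rw [Nat.le_sqrt]
    nlinarith
  have hsq : s ^ 2 ≤ r * m := Nat.sqrt_le' (r * m)
  have hs2 : (s + 1) ^ 2 ≤ 4 * (r * m) := by nlinarith
  have hchain : m ^ r ≤ 2 ^ r * (2 ^ ℓ * (4 * (s + 1)) ^ r) := by
    calc m ^ r ≤ 2 ^ r * ((m + 1 - r) ^ r) := h2
      _ ≤ 2 ^ r * (r.factorial * (m.choose r)) := Nat.mul_le_mul_left _ h1
      _ ≤ 2 ^ r * (2 ^ ℓ * (4 * (s + 1)) ^ r) := Nat.mul_le_mul_left _ h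
  have e1 : ((2:ℕ) ^ r) ^ 2 = 4 ^ r := by
    rw [← pow_mul, mul_comm r 2, pow_mul]; norm_num
  have e2 : ((2:ℕ) ^ ℓ) ^ 2 = 4 ^ ℓ := by
    rw [← pow_mul, mul_comm ℓ 2, pow_mul]; norm_num
  have e3 : (((4 * (s + 1)) : ℕ) ^ r) ^ 2 = (16 * (s + 1) ^ 2) ^ r := by
    rw [← pow_mul, mul_comm r 2, pow_mul]
    congr 1
    ring
  have hB : (2 ^ r * (2 ^ ℓ * (4 * (s + 1)) ^ r)) ^ 2
      = 4 ^ r * (4 ^ ℓ * (16 * (s + 1) ^ 2) ^ r) := by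
    calc (2 ^ r * (2 ^ ℓ * (4 * (s + 1)) ^ r)) ^ 2
        = ((2:ℕ) ^ r) ^ 2 * (((2:ℕ) ^ ℓ) ^ 2 * (((4 * (s + 1)) : ℕ) ^ r) ^ 2) := by ring
      _ = 4 ^ r * (4 ^ ℓ * (16 * (s + 1) ^ 2) ^ r) := by rw [e1, e2, e3]
  have hC : (16 * (s + 1) ^ 2) ^ r ≤ (64 * (r * m)) ^ r := by
    apply Nat.pow_le_pow_left
    calc 16 * (s + 1) ^ 2 ≤ 16 * (4 * (r * m)) := Nat.mul_le_mul_left 16 hs2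
      _ = 64 * (r * m) := by ring
  have h3 : m ^ r * m ^ r ≤ (4 ^ ℓ * (256 * r) ^ r) * m ^ r := by
    have hDD : 4 ^ r * (64 * (r * m)) ^ r = (256 * r) ^ r * m ^ r := by
      rw [← Nat.mul_pow]
      rw [show (4 * (64 * (r * m))) = (256 * r) * m by ring]
      rw [Nat.mul_pow]
    calc m ^ r * m ^ r = (m ^ r) ^ 2 := (sq (m ^ r)).symm
      _ ≤ (2 ^ r * (2 ^ ℓ * (4 * (s + 1)) ^ r)) ^ 2 := Nat.pow_le_pow_left hchain 2
      _ = 4 ^ r * (4 ^ ℓ * (16 * (s + 1) ^ 2) ^ r) := hB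
      _ ≤ 4 ^ r * (4 ^ ℓ * (64 * (r * m)) ^ r) :=
          Nat.mul_le_mul_left _ (Nat.mul_le_mul_left _ hC)
      _ = 4 ^ ℓ * (4 ^ r * (64 * (r * m)) ^ r) := by ring
      _ = 4 ^ ℓ * ((256 * r) ^ r * m ^ r) := by rw [hDD]
      _ = (4 ^ ℓ * (256 * r) ^ r) * m ^ r := by ring
  have h4 : m ^ r ≤ 4 ^ ℓ * (256 * r) ^ r :=
    Nat.le_of_mul_le_mul_right h3 (by positivity)
  have hrne : (r:ℝ) ≠ 0 := ne_of_gt hr0'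
  have hexp : ((2:ℝ) ^ ((2 * (ℓ:ℝ)) / (r:ℝ))) ^ r = (4:ℝ) ^ ℓ := by
    rw [← Real.rpow_natCast ((2:ℝ) ^ ((2 * (ℓ:ℝ)) / (r:ℝ))) r]
    rw [← Real.rpow_mul (by norm_num)]
    rw [div_mul_cancel₀ _ hrne]
    rw [show (2 * (ℓ:ℝ)) = ((2 * ℓ : ℕ) : ℝ) by push_cast; ring]
    rw [Real.rpow_natCast]
    rw [pow_mul]
    norm_num
  have h5 : (m:ℝ) ^ r ≤ (256 * (r:ℝ) * (2:ℝ) ^ ((2 * (ℓ:ℝ)) / (r:ℝ))) ^ r := by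
    rw [mul_pow, hexp]
    have hcast : (m:ℝ) ^ r ≤ (4:ℝ) ^ ℓ * (256 * (r:ℝ)) ^ r := by exact_mod_cast h4
    calc (m:ℝ) ^ r ≤ (4:ℝ) ^ ℓ * (256 * (r:ℝ)) ^ r := hcast
      _ = (256 * (r:ℝ)) ^ r * (4:ℝ) ^ ℓ := mul_comm _ _
  exact (pow_le_pow_iff_left₀ (by positivity) (by positivity) (by omega)).mp h5


end DesignAux

/-- Main design lemma. There is a universal constant `C > 0` such that
for all `n ≥ r ≥ s ≥ 1` with `r` even: if `Q ⊆ 𝔽₂ⁿ` is a linear `[n,k,d]`-code with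
`d > 2(r−s)`, then `G_{Q ∩ Δ_r}` is an `(n,r,s)`-design with independence number
`≤ C·r³·2^{2(n−k)/r}`. -/
theorem main_design_lemma :
    ∃ C : ℝ, 0 < C ∧
      ∀ n r s k : ℕ, 1 ≤ s → s ≤ r → r ≤ n → Even r →
        ∀ Q : Submodule (ZMod 2) (Fin n → ZMod 2),
          Module.finrank (ZMod 2) Q = k →
          (∀ x ∈ Q, ∀ y ∈ Q, x ≠ y → 2 * (r - s) < hdist x y) →
          IsDesign n r s (hypergraphOf (weightSlice n r Q)) ∧
            (indepNum n (hypergraphOf (weightSlice n r Q)) : ℝ) ≤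
              C * (r : ℝ) ^ 3 * (2 : ℝ) ^ (2 * ((n : ℝ) - (k : ℝ)) / (r : ℝ)) := by
  refine ⟨256, by norm_num, ?_⟩
  intro n r s k hs1 hsr hrn hre Q hk hQd
  have hr0 : 0 < r := lt_of_lt_of_le hs1 hsr
  have huniform : ∀ e ∈ hypergraphOf (weightSlice n r Q), e.card = r := by
    intro e he
    obtain ⟨x, hx, rfl⟩ := Finset.mem_image.mp he
    simp only [weightSlice, Set.Finite.mem_toFinset, Set.mem_setOf_eq] at hx
    exact hx.2
  constructor
  · constructor
    · exact huniform
    · intro e₁ he₁ e₂ he₂ hne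
      obtain ⟨x, hx, rfl⟩ := Finset.mem_image.mp he₁
      obtain ⟨y, hy, rfl⟩ := Finset.mem_image.mp he₂
      simp only [weightSlice, Set.Finite.mem_toFinset, Set.mem_setOf_eq] at hx hy
      have hxy : x ≠ y := fun h => hne (by rw [h])
      have hd := hQd x hx.1 y hy.1 hxy
      have hsum := DesignAux.wt_sub_eq x y
      have hwx : wt x = r := hx.2
      have hwy : wt y = r := hy.2
      have hsx : (supp x).card = r := hwx
      have hsy : (supp y).card = r := hwy
      unfold hdist at hd
      omega
  · set E := hypergraphOf (weightSlice n r Q) with hE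
    have hne : ({m | ∃ S : Finset (Fin n), (∀ e ∈ E, ¬ e ⊆ S) ∧ S.card = m} : Set ℕ).Nonempty := by
      refine ⟨0, ∅, fun e he hsub => ?_, Finset.card_empty⟩
      have hcard := huniform e he
      rw [Finset.subset_empty] at hsub
      rw [hsub, Finset.card_empty] at hcard
      omega
    have hbdd : BddAbove ({m | ∃ S : Finset (Fin n), (∀ e ∈ E, ¬ e ⊆ S) ∧ S.card = m} : Set ℕ) := by
      refine ⟨n, fun m hm => ?_⟩
      obtain ⟨S, _, rfl⟩ := hm
      have h1 := Finset.card_le_univ S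
      rwa [Fintype.card_fin] at h1
    have hmem := Nat.sSup_mem hne hbdd
    obtain ⟨S, hSind, hScard⟩ := hmem
    have hb := DesignAux.indep_card_bound r k hr0 hre Q hk S hSind
    have hnum := DesignAux.numeric_bound S.card r (n - k) hr0 hb
    rw [hScard] at hnum
    have hkn : k ≤ n := by
      have h1 := Submodule.finrank_le Q
      rw [Module.finrank_fintype_fun_eq_card, Fintype.card_fin, hk] at h1
      exact h1
    have hexp : (2 * (((n - k : ℕ)) : ℝ)) / (r:ℝ) = 2 * ((n : ℝ) - (k : ℝ)) / (r : ℝ) := by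
      rw [Nat.cast_sub hkn]
    have hrpos : (0:ℝ) < (2:ℝ) ^ (2 * ((n : ℝ) - (k : ℝ)) / (r : ℝ)) :=
      Real.rpow_pos_of_pos (by norm_num) _
    have hr1 : (1:ℝ) ≤ (r:ℝ) := by exact_mod_cast hr0
    have hrcube : (r:ℝ) ≤ (r:ℝ)^3 := by nlinarith [sq_nonneg ((r:ℝ) - 1), sq_nonneg ((r:ℝ) + 1)]
    calc (indepNum n E : ℝ)
        ≤ 256 * r * (2 : ℝ) ^ ((2 * ((n - k : ℕ) : ℝ)) / (r : ℝ)) := hnum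
      _ = 256 * r * (2 : ℝ) ^ (2 * ((n : ℝ) - (k : ℝ)) / (r : ℝ)) := by rw [hexp]
      _ ≤ 256 * (r : ℝ) ^ 3 * (2 : ℝ) ^ (2 * ((n : ℝ) - (k : ℝ)) / (r : ℝ)) := by
          have hmono := mul_le_mul_of_nonneg_right
            (by nlinarith : 256 * (r:ℝ) ≤ 256 * (r:ℝ)^3) (le_of_lt hrpos)
          linarith
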